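/- Proximal gradient method O(1/k) rate: Let φ : ℝⁿ → ℝ be convex differentiable with L-Lipschitz gradient, ψ : ℝⁿ → ℝ ∪ {∞} proper closed convex, f = φ + ψ with finite minimum f̄ attained on nonempty set X̄. Let x_{k+1} = Prox_{1/L}(x_k − (1/L)∇φ(x_k)). Then for all k ≥ 1, f(x_k) − f̄ ≤ L·dist(x₀, X̄)²/(2k). -/

import Mathlib

open scoped RealInnerProductSpace

variable {E : Type*} [NormedAddCommGroup E] [InnerProductSpace ℝ E] [FiniteDimensional ℝ E]

/-- Convex conjugate of an extended-real-valued function. -/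
noncomputable def conjFn (f : E → EReal) (z : E) : EReal :=
  ⨆ x : E, (((⟪z, x⟫ : ℝ) : EReal) - f x)

/-- Subdifferential of an extended-real-valued function. -/
def SubgradAt (f : E → EReal) (x : E) : Set E :=
  {g : E | ∀ y : E, f x + (((⟪g, y - x⟫ : ℝ)) : EReal) ≤ f y}

/-- Subdifferential of a real-valued function. -/
def RSubgradAt (f : E → ℝ) (x : E) : Set E :=
  {g : E | ∀ y : E, f x + ⟪g, y - x⟫ ≤ f y}

/-- Convexity for extended-real-valued functions. -/
def EConvex (f : E → EReal) : Prop :=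
  ∀ x y : E, ∀ a b : ℝ, 0 ≤ a → 0 ≤ b → a + b = 1 →
    f (a • x + b • y) ≤ ((a : ℝ) : EReal) * f x + ((b : ℝ) : EReal) * f y

/-- Properness of an extended-real-valued function. -/
def ProperFn (f : E → EReal) : Prop := (∃ x, f x ≠ ⊤) ∧ ∀ x, f x ≠ ⊥

/-- `p` is the proximal point `Prox_t(v)` of `ψ`, i.e. a minimizer of
`y ↦ ψ(y) + ‖y - v‖²/(2t)`. -/
def IsProxPt (ψ : E → EReal) (t : ℝ) (v p : E) : Prop :=
  ∀ y : E, ψ p + ((‖p - v‖^2 / (2*t) : ℝ) : EReal) ≤ ψ y + ((‖y - v‖^2 / (2*t) : ℝ) : EReal)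

open Set Filter Topology

lemma pgr_line_hasDerivAt (φ : E → ℝ) (φ' : E → E) (hφd : ∀ v, HasGradientAt φ (φ' v) v)
    (x u : E) (t : ℝ) :
    HasDerivAt (fun s : ℝ => φ (x + s • u)) ⟪φ' (x + t • u), u⟫ t := by
  have h1 : HasDerivAt (fun s : ℝ => x + s • u) u t := by
    simpa using ((hasDerivAt_id t).smul_const u).const_add x
  have h2 := (hφd (x + t • u)).hasFDerivAt.comp_hasDerivAt t h1
  simpa [InnerProductSpace.toDual_apply_apply, Function.comp_def] using h2

/-- The descent lemma for `L`-Lipschitz gradients. -/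
lemma pgr_descent (φ : E → ℝ) (φ' : E → E) (hφd : ∀ v, HasGradientAt φ (φ' v) v)
    (L : ℝ) (hlip : ∀ u v : E, ‖φ' u - φ' v‖ ≤ L * ‖u - v‖) (x y : E) :
    φ y ≤ φ x + ⟪φ' x, y - x⟫ + L/2 * ‖y - x‖^2 := by
  set u := y - x with hu
  set c := ⟪φ' x, u⟫ with hc
  set h : ℝ → ℝ := fun t => φ (x + t • u) - t * c - L/2 * ‖u‖^2 * t^2 with hh
  have hder : ∀ t : ℝ, HasDerivAt h (⟪φ' (x + t • u), u⟫ - c - L/2 * ‖u‖^2 * (2*t)) t := by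
    intro t
    have h1 := ((pgr_line_hasDerivAt φ φ' hφd x u t).sub ((hasDerivAt_id t).mul_const c)).sub
      ((hasDerivAt_pow 2 t).const_mul (L/2 * ‖u‖^2))
    refine h1.congr_deriv ?_
    push_cast
    ring
  have mono : AntitoneOn h (Icc (0:ℝ) 1) := by
    apply antitoneOn_of_deriv_nonpos (convex_Icc 0 1)
    · exact fun t _ => (hder t).continuousAt.continuousWithinAt
    · exact fun t _ => (hder t).differentiableAt.differentiableWithinAt
    · intro t ht
      rw [interior_Icc] at ht
      rw [(hder t).deriv]
      have hcs : ⟪φ' (x + t • u) - φ' x, u⟫ ≤ ‖φ' (x + t • u) - φ' x‖ * ‖u‖ :=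
        real_inner_le_norm _ _
      have hl : ‖φ' (x + t • u) - φ' x‖ ≤ L * (t * ‖u‖) := by
        have := hlip (x + t • u) x
        simpa [norm_smul, abs_of_pos ht.1] using this
      have hsub : ⟪φ' (x + t • u), u⟫ - c = ⟪φ' (x + t • u) - φ' x, u⟫ := by
        rw [inner_sub_left]
      have hn1 : (0:ℝ) ≤ ‖u‖ := norm_nonneg _
      nlinarith [mul_le_mul_of_nonneg_right hl hn1]
  have h10 : h 1 ≤ h 0 := mono (by norm_num) (by norm_num) zero_le_one
  have e1 : x + (1:ℝ) • u = y := by simp [hu]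
  have e0 : x + (0:ℝ) • u = x := by simp
  simp only [hh, e1, e0, one_mul, one_pow, mul_one] at h10
  simp only [zero_mul, mul_zero, sub_zero, pow_two] at h10
  nlinarith [h10]

/-- The gradient inequality for convex differentiable functions. -/
lemma pgr_grad_convex (φ : E → ℝ) (φ' : E → E) (hφd : ∀ v, HasGradientAt φ (φ' v) v)
    (hφc : ConvexOn ℝ Set.univ φ) (x z : E) :
    φ x + ⟪φ' x, z - x⟫ ≤ φ z := by
  set u := z - x with hu
  set q : ℝ → ℝ := fun t => φ (x + t • u) with hq
  have hd : HasDerivAt q ⟪φ' x, u⟫ 0 := by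
    simpa using pgr_line_hasDerivAt φ φ' hφd x u 0
  have hslope : Tendsto (slope q 0) (𝓝[>] 0) (𝓝 ⟪φ' x, u⟫) :=
    (hasDerivAt_iff_tendsto_slope.1 hd).mono_left
      (nhdsWithin_mono 0 (fun t ht => ne_of_gt ht))
  have hev : ∀ᶠ t in 𝓝[>] (0:ℝ), slope q 0 t ≤ φ z - φ x := by
    filter_upwards [Ioc_mem_nhdsGT_of_mem (Set.left_mem_Ico.2 one_pos)] with t ht
    have hconv := hφc.2 (Set.mem_univ x) (Set.mem_univ z)
      (by linarith [ht.2] : (0:ℝ) ≤ 1 - t) ht.1.le (by ring)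
    have heq : (1 - t) • x + t • z = x + t • u := by
      simp [hu, smul_sub, sub_smul, one_smul]; abel
    rw [heq] at hconv
    rw [slope_def_field, sub_zero, div_le_iff₀ ht.1]
    have h0 : q 0 = φ x := by simp [hq]
    have h1 : q t = φ (x + t • u) := rfl
    rw [h0, h1]
    simp only [smul_eq_mul] at hconv
    nlinarith [hconv]
  have := le_of_tendsto hslope hev
  linarith

lemma pgr_aux_limit {A B C : ℝ} (hC : 0 ≤ C) (h : ∀ l : ℝ, 0 < l → l ≤ 1 → A ≤ B + l * C) :
    A ≤ B := by
  by_contra hcon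
  push_neg at hcon
  have h1 : 0 < (A - B)/(2*(C+1)) := by
    apply div_pos (by linarith) (by linarith)
  set l := min 1 ((A - B)/(2*(C+1))) with hl
  have hl0 : 0 < l := lt_min one_pos h1
  have hle := h l hl0 (min_le_left _ _)
  have hlC : l * C ≤ ((A - B)/(2*(C+1))) * C :=
    mul_le_mul_of_nonneg_right (min_le_right _ _) hC
  have key : ((A - B)/(2*(C+1))) * C < A - B := by
    rw [div_mul_eq_mul_div, div_lt_iff₀ (by linarith)]
    nlinarith
  linarith

lemma pgr_prox_ne_top (ψ : E → EReal) (hψp : ProperFn ψ) (t : ℝ) (v p : E)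
    (hp : IsProxPt ψ t v p) : ψ p ≠ ⊤ := by
  obtain ⟨y0, hy0⟩ := hψp.1
  intro htop
  have h1 := hp y0
  rw [htop, EReal.top_add_coe] at h1
  have h2 : ψ y0 + ((‖y0 - v‖^2 / (2*t) : ℝ) : EReal) ≤
      (((ψ y0).toReal + ‖y0 - v‖^2 / (2*t) : ℝ) : EReal) := by
    rw [EReal.coe_add]
    exact add_le_add_left (EReal.le_coe_toReal hy0) _
  exact (EReal.coe_ne_top _) (top_le_iff.1 (h1.trans h2))

lemma pgr_quad_id (P Z : E) (l : ℝ) :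
    ‖(1-l) • P + l • Z‖^2 = (1-l)*‖P‖^2 + l*‖Z‖^2 - l*(1-l)*‖Z - P‖^2 := by
  have h1 : ‖(1-l) • P + l • Z‖^2
      = (1-l)^2*‖P‖^2 + 2*(l*(1-l)*⟪P,Z⟫) + l^2*‖Z‖^2 := by
    rw [norm_add_sq_real, real_inner_smul_left, real_inner_smul_right, norm_smul, norm_smul,
      mul_pow, mul_pow, Real.norm_eq_abs, Real.norm_eq_abs, sq_abs, sq_abs]
    ring
  have h2 : ‖Z - P‖^2 = ‖Z‖^2 - 2*⟪Z,P⟫ + ‖P‖^2 := norm_sub_sq_real Z P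
  rw [h1, h2, real_inner_comm Z P]
  ring

/-- Three-point inequality for the proximal operator of a convex function. -/
lemma pgr_three_point (ψ : E → EReal) (hψc : EConvex ψ) (hψp : ProperFn ψ)
    (L : ℝ) (hL : 0 < L) (v p : E) (hp : IsProxPt ψ (1/L) v p) (z : E) (hz : ψ z ≠ ⊤) :
    (ψ p).toReal + L/2*‖p-v‖^2 + L/2*‖z-p‖^2 ≤ (ψ z).toReal + L/2*‖z-v‖^2 := by
  have hdiv : ∀ w : E, ‖w‖^2/(2*(1/L)) = L/2*‖w‖^2 := by
    intro w
    field_simp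
  have hpt : ψ p ≠ ⊤ := pgr_prox_ne_top ψ hψp _ _ _ hp
  set a := (ψ p).toReal with ha
  set b := (ψ z).toReal with hb
  have hpa : ψ p = ((a : ℝ) : EReal) := (EReal.coe_toReal hpt (hψp.2 p)).symm
  have hzb : ψ z = ((b : ℝ) : EReal) := (EReal.coe_toReal hz (hψp.2 z)).symm
  apply pgr_aux_limit (C := L/2*‖z-p‖^2) (by positivity)
  intro l hl0 hl1
  set yl := (1-l) • p + l • z with hyl
  have hconv : ψ yl ≤ (((1-l)*a + l*b : ℝ) : EReal) := by
    have := hψc p z (1-l) l (by linarith) hl0.le (by ring)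
    rw [hpa, hzb, ← EReal.coe_mul, ← EReal.coe_mul, ← EReal.coe_add] at this
    exact this
  have hprox := hp yl
  have hchain : ((a + ‖p - v‖^2/(2*(1/L)) : ℝ) : EReal) ≤
      (((1-l)*a + l*b + ‖yl - v‖^2/(2*(1/L)) : ℝ) : EReal) := by
    rw [EReal.coe_add, EReal.coe_add, ← hpa]
    exact hprox.trans (add_le_add_left hconv _)
  rw [EReal.coe_le_coe_iff] at hchain
  rw [hdiv, hdiv] at hchain
  have hid : ‖yl - v‖^2 = (1-l)*‖p-v‖^2 + l*‖z-v‖^2 - l*(1-l)*‖(z-v) - (p-v)‖^2 := by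
    have : yl - v = (1-l) • (p - v) + l • (z - v) := by
      rw [hyl]
      module
    rw [this, pgr_quad_id]
  have hzp : ‖(z-v) - (p-v)‖ = ‖z - p‖ := by
    congr 1
    abel
  rw [hzp] at hid
  rw [hid] at hchain
  -- hchain : a + L/2*‖p-v‖^2 ≤ (1-l)*a + l*b + L/2*(...)
  have goal_mul : l * (a + L/2*‖p-v‖^2 + L/2*‖z-p‖^2)
      ≤ l * ((b + L/2*‖z-v‖^2) + l * (L/2*‖z-p‖^2)) := by nlinarith [hchain]
  exact le_of_mul_le_mul_left goal_mul hl0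

/-- `O(1/k)` convergence rate of the proximal gradient method. -/
theorem prox_grad_rate (φ : E → ℝ) (φ' : E → E)
    (hφd : ∀ v, HasGradientAt φ (φ' v) v) (hφc : ConvexOn ℝ Set.univ φ)
    (L : ℝ) (hL : 0 < L) (hlip : ∀ u v : E, ‖φ' u - φ' v‖ ≤ L * ‖u - v‖)
    (ψ : E → EReal) (hψc : EConvex ψ) (hψp : ProperFn ψ) (hψlsc : LowerSemicontinuous ψ)
    (f : E → EReal) (hf : ∀ v, f v = ((φ v : ℝ) : EReal) + ψ v)
    (fbar : ℝ) (Xbar : Set E) (hXbar : Xbar = {v : E | f v = ((fbar : ℝ) : EReal)})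
    (hne : Xbar.Nonempty) (hmin : ∀ v : E, ((fbar : ℝ) : EReal) ≤ f v)
    (x : ℕ → E)
    (hstep : ∀ k : ℕ, IsProxPt ψ (1/L) (x k - (1/L) • φ' (x k)) (x (k+1))) :
    ∀ k : ℕ, 1 ≤ k →
      f (x k) ≤ ((fbar + L * (Metric.infDist (x 0) Xbar)^2 / (2*(k:ℝ)) : ℝ) : EReal) := by
  have hψbot := hψp.2
  have hne_top : ∀ j : ℕ, ψ (x (j+1)) ≠ ⊤ := fun j => pgr_prox_ne_top ψ hψp _ _ _ (hstep j)
  obtain ⟨F, hF⟩ : ∃ F : ℕ → ℝ, ∀ j, F j = φ (x j) + (ψ (x j)).toReal := ⟨_, fun _ => rfl⟩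
  have hfx : ∀ j : ℕ, 1 ≤ j → f (x j) = ((F j : ℝ) : EReal) := by
    intro j hj
    obtain ⟨i, rfl⟩ : ∃ i, j = i + 1 := ⟨j - 1, (Nat.succ_pred_eq_of_pos hj).symm⟩
    rw [hF, hf, EReal.coe_add, EReal.coe_toReal (hne_top i) (hψbot _)]
  -- key one-step inequality
  have keystep : ∀ (j : ℕ) (z : E), ψ z ≠ ⊤ →
      F (j+1) + L/2*‖z - x (j+1)‖^2 ≤ (φ z + (ψ z).toReal) + L/2*‖z - x j‖^2 := by
    intro j z hz
    have h3 := pgr_three_point ψ hψc hψp L hL _ _ (hstep j) z hz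
    have hdes := pgr_descent φ φ' hφd L hlip (x j) (x (j+1))
    have hcvx := pgr_grad_convex φ φ' hφd hφc (x j) z
    set g := φ' (x j) with hg
    set v := x j - (1/L) • g with hv
    have hexp : ∀ w : E, L/2*‖w - v‖^2 = L/2*‖w - x j‖^2 + ⟪g, w - x j⟫ + ‖g‖^2/(2*L) := by
      intro w
      have h1 : w - v = (w - x j) + (1/L) • g := by
        rw [hv]; abel
      rw [h1, norm_add_sq_real, real_inner_smul_right, norm_smul, Real.norm_eq_abs]
      have habs : |1/L| = 1/L := abs_of_pos (by positivity)
      rw [habs, mul_pow, real_inner_comm]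
      field_simp
    have e1 := hexp (x (j+1))
    have e2 := hexp z
    simp only [hF]
    linarith [h3, hdes, hcvx, e1, e2]
  have hFlb : ∀ j : ℕ, 1 ≤ j → fbar ≤ F j := by
    intro j hj
    have := hmin (x j)
    rw [hfx j hj] at this
    exact EReal.coe_le_coe_iff.1 this
  have hmono : ∀ j : ℕ, 1 ≤ j → F (j+1) ≤ F j := by
    intro j hj
    obtain ⟨i, rfl⟩ : ∃ i, j = i + 1 := ⟨j - 1, (Nat.succ_pred_eq_of_pos hj).symm⟩
    have h1 := keystep (i+1) (x (i+1)) (hne_top i)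
    have h2 : (0:ℝ) ≤ L/2*‖x (i+1) - x (i+2)‖^2 := by positivity
    simp only [sub_self, norm_zero] at h1
    simp only [hF] at h1 ⊢
    nlinarith [h1]
  -- per-minimizer bound
  have main_z : ∀ (k : ℕ), 1 ≤ k → ∀ z ∈ Xbar,
      (k:ℝ) * (F k - fbar) ≤ L/2 * ‖z - x 0‖^2 := by
    intro k hk z hzmem
    rw [hXbar] at hzmem
    have hfz : f z = ((fbar : ℝ) : EReal) := hzmem
    have hψz : ψ z ≠ ⊤ := by
      intro h
      rw [hf z, h, EReal.coe_add_top] at hfz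
      exact (EReal.coe_ne_top fbar) hfz.symm
    have hφψz : φ z + (ψ z).toReal = fbar := by
      have : ((φ z + (ψ z).toReal : ℝ) : EReal) = ((fbar : ℝ) : EReal) := by
        rw [EReal.coe_add, EReal.coe_toReal hψz (hψbot z), ← hf z, hfz]
      exact EReal.coe_eq_coe_iff.1 this
    have htel : ∀ j : ℕ, 1 ≤ j →
        (j:ℝ) * (F j - fbar) + L/2*‖z - x j‖^2 ≤ L/2*‖z - x 0‖^2 := by
      intro j hj
      induction j, hj using Nat.le_induction with
      | base =>
        have h1 := keystep 0 z hψz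
        rw [hφψz] at h1
        push_cast
        linarith
      | succ n hn ih =>
        have h1 := keystep n z hψz
        rw [hφψz] at h1
        have h2 := hmono n hn
        have h3 := hFlb (n+1) (by omega)
        have h4 : (n:ℝ) * (F (n+1) - fbar) ≤ (n:ℝ) * (F n - fbar) :=
          mul_le_mul_of_nonneg_left (by linarith) (Nat.cast_nonneg n)
        have hexpand : ((n:ℝ)+1)*(F (n+1) - fbar) = (n:ℝ)*(F (n+1)-fbar) + (F (n+1)-fbar) := by
          ring
        push_cast
        linarith [h1, h4, ih, hexpand]
    have := htel k hk
    have hnn : (0:ℝ) ≤ L/2*‖z - x k‖^2 := by positivity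
    linarith
  intro k hk
  set d := Metric.infDist (x 0) Xbar with hd
  have hk0 : (0:ℝ) < (k:ℝ) := by exact_mod_cast hk
  have hgoal_real : F k ≤ fbar + L * d^2 / (2*(k:ℝ)) := by
    by_contra hcon
    push_neg at hcon
    have hT : d^2 < 2*(k:ℝ)*(F k - fbar)/L := by
      rw [lt_div_iff₀ hL]
      have : L * d^2 < 2*(k:ℝ)*(F k - fbar) := by
        have h1 : L * d^2 / (2*(k:ℝ)) < F k - fbar := by linarith
        calc L * d^2 = (L * d^2 / (2*(k:ℝ))) * (2*(k:ℝ)) := by field_simp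
          _ < (F k - fbar) * (2*(k:ℝ)) := by
              apply mul_lt_mul_of_pos_right h1 (by positivity)
          _ = 2*(k:ℝ)*(F k - fbar) := by ring
      linarith
    have hd0 : 0 ≤ d := Metric.infDist_nonneg
    have hT0 : 0 ≤ 2*(k:ℝ)*(F k - fbar)/L := le_trans (sq_nonneg d) hT.le
    have hdl : d < Real.sqrt (2*(k:ℝ)*(F k - fbar)/L) := (Real.lt_sqrt hd0).2 hT
    obtain ⟨z, hzm, hdz⟩ := (Metric.infDist_lt_iff hne).1 hdl
    have hbd := main_z k hk z hzm
    have hzn : ‖z - x 0‖ = dist (x 0) z := by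
      rw [dist_eq_norm, norm_sub_rev]
    have hdist2 : dist (x 0) z ^ 2 < 2*(k:ℝ)*(F k - fbar)/L := by
      have := pow_lt_pow_left₀ hdz dist_nonneg (n := 2) (by norm_num)
      rwa [Real.sq_sqrt hT0] at this
    rw [hzn] at hbd
    have : (k:ℝ) * (F k - fbar) < L/2 * (2*(k:ℝ)*(F k - fbar)/L) := by
      apply lt_of_le_of_lt hbd
      apply mul_lt_mul_of_pos_left hdist2 (by positivity)
    have heq : L/2 * (2*(k:ℝ)*(F k - fbar)/L) = (k:ℝ)*(F k - fbar) := by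
      field_simp
    rw [heq] at this
    exact lt_irrefl _ this
  rw [hfx k hk]
  exact EReal.coe_le_coe_iff.2 hgoal_real
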